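/- Suppose μ_t = μ₀ + t μ₁ + ... + t^{m−1} μ_{m−1} is a truncated formal deformation of the associative algebra (A, μ₀) satisfying the deformation equations up to order m−1. Then the obstruction term Ω_m(x,y,z) = Σ_{i=1}^{m−1} (μ_i(μ_{m−i}(x,y),z) − μ_i(x,μ_{m−i}(y,z))) is a Hochschild 3-cocycle: δΩ_m = 0. Consequently the truncated deformation extends to order m if and only if the class of Ω_m in H³(A,A) vanishes; in particular if H³(A,A) = 0 every truncated deformation extends. -/

import Mathlib

open Finset

private lemma cyc3 {β : Type*} [AddCommMonoid β] (N : ℕ) (f : ℕ → ℕ → ℕ → β) :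
    ∑ t ∈ antidiagonal N, ∑ p ∈ antidiagonal t.2, f t.1 p.1 p.2
      = ∑ t ∈ antidiagonal N, ∑ p ∈ antidiagonal t.2, f p.1 p.2 t.1 := by
  rw [sum_sigma', sum_sigma']
  refine sum_nbij' (fun x => ⟨(x.2.2, x.1.1 + x.2.1), (x.1.1, x.2.1)⟩)
    (fun x => ⟨(x.2.1, x.2.2 + x.1.1), (x.2.2, x.1.1)⟩) ?_ ?_ ?_ ?_ ?_ <;>
    rintro ⟨⟨a, b⟩, ⟨c, d⟩⟩ h <;>
    simp only [mem_sigma, Finset.HasAntidiagonal.mem_antidiagonal] at h ⊢ <;>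
    obtain ⟨h1, h2⟩ := h
  · exact ⟨by omega, trivial⟩
  · exact ⟨by omega, trivial⟩
  · subst h2; rfl
  · subst h2; rfl

private lemma antisym3 {β : Type*} [AddCommGroup β] (k : ℕ) (g : ℕ → ℕ → β) :
    ∑ p ∈ antidiagonal k, (g p.1 p.2 - g p.2 p.1) = 0 := by
  rw [Finset.sum_sub_distrib, sub_eq_zero]
  exact (Finset.Nat.sum_antidiagonal_swap (f := fun p => g p.1 p.2)).symm

section
variable {K A : Type*} [Field K] [AddCommGroup A] [Module K A]

private def sS (n : ℕ → A →ₗ[K] A →ₗ[K] A) (k : ℕ) (a b c : A) : A :=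
  ∑ p ∈ antidiagonal k, (n p.1 (n p.2 a b) c - n p.1 a (n p.2 b c))

private lemma pentagon (n : ℕ → A →ₗ[K] A →ₗ[K] A) (M : ℕ)
    (hn : ∀ k : ℕ, k < M → ∀ a b c : A, sS n k a b c = 0) (x y z w : A) :
    n 0 x (sS n M y z w) - sS n M (n 0 x y) z w + sS n M x (n 0 y z) w
      - sS n M x y (n 0 z w) + n 0 (sS n M x y z) w = 0 := by
  have step1 : ∑ t ∈ antidiagonal M,
      (n t.1 x (sS n t.2 y z w) - sS n t.2 (n t.1 x y) z w + sS n t.2 x (n t.1 y z) w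
        - sS n t.2 x y (n t.1 z w) + n t.1 (sS n t.2 x y z) w)
      = n 0 x (sS n M y z w) - sS n M (n 0 x y) z w + sS n M x (n 0 y z) w
        - sS n M x y (n 0 z w) + n 0 (sS n M x y z) w := by
    apply Finset.sum_eq_single_of_mem (0, M) (by simp)
    rintro ⟨b1, b2⟩ hb hbne
    have hb' : b1 + b2 = M := mem_antidiagonal.mp hb
    have hb1 : b1 ≠ 0 := by
      rintro rfl
      exact hbne (by rw [Prod.mk.injEq]; omega)
    have hb2 : b2 < M := by omega
    simp [hn b2 hb2]
  rw [← step1]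
  have expand : ∀ t ∈ antidiagonal M,
      n t.1 x (sS n t.2 y z w) - sS n t.2 (n t.1 x y) z w + sS n t.2 x (n t.1 y z) w
        - sS n t.2 x y (n t.1 z w) + n t.1 (sS n t.2 x y z) w
      = (∑ p ∈ antidiagonal t.2,
          (n t.1 x (n p.1 (n p.2 y z) w) - n t.1 x (n p.1 y (n p.2 z w))
            + (n t.1 (n p.1 (n p.2 x y) z) w - n t.1 (n p.1 x (n p.2 y z)) w)))
        + ∑ p ∈ antidiagonal t.2,
          (-(n p.1 (n p.2 (n t.1 x y) z) w - n p.1 (n t.1 x y) (n p.2 z w))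
            + (n p.1 (n p.2 x (n t.1 y z)) w - n p.1 x (n p.2 (n t.1 y z) w))
            - (n p.1 (n p.2 x y) (n t.1 z w) - n p.1 x (n p.2 y (n t.1 z w)))) := by
    intro t ht
    simp only [sS, map_sum, map_sub, LinearMap.sum_apply, LinearMap.sub_apply]
    rw [← Finset.sum_sub_distrib, ← Finset.sum_add_distrib, ← Finset.sum_sub_distrib,
      ← Finset.sum_add_distrib, ← Finset.sum_add_distrib]
    exact Finset.sum_congr rfl fun p _ => by abel
  rw [Finset.sum_congr rfl expand, Finset.sum_add_distrib,
    ← cyc3 M (fun a b c => -(n a (n b (n c x y) z) w - n a (n c x y) (n b z w))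
      + (n a (n b x (n c y z)) w - n a x (n b (n c y z) w))
      - (n a (n b x y) (n c z w) - n a x (n b y (n c z w)))),
    ← Finset.sum_add_distrib]
  rw [show (0 : A) = ∑ t ∈ antidiagonal M, (0 : A) by simp]
  refine Finset.sum_congr rfl fun t _ => ?_
  rw [← Finset.sum_add_distrib]
  rw [show (0 : A) = ∑ p ∈ antidiagonal t.2,
      (n t.1 (n p.2 x y) (n p.1 z w) - n t.1 (n p.1 x y) (n p.2 z w)) from
      (antisym3 t.2 fun u v => n t.1 (n v x y) (n u z w)).symm]
  exact Finset.sum_congr rfl fun p _ => by abel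
end

/-- For a truncated formal deformation `μ₀ + tμ₁ + ⋯ + t^{M-1}μ_{M-1}`
satisfying the deformation equations up to order `M-1`, the obstruction
`Ω_M = ∑_{i=1}^{M-1} μ_i ∘ μ_{M-i}` (packaged as the trilinear map `W`) is a
Hochschild 3-cocycle; the deformation extends to order `M` iff `Ω_M` is a
3-coboundary; in particular if every 3-cocycle is a coboundary (`H³(A,A)=0`)
then the truncated deformation extends. -/
theorem stmt_8 {K A : Type*} [Field K] [AddCommGroup A] [Module K A]
    (m : ℕ → A →ₗ[K] A →ₗ[K] A) (M : ℕ) (hM : 1 ≤ M)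
    (htrunc : ∀ k : ℕ, k < M → ∀ x y z : A,
      ∑ p ∈ Finset.HasAntidiagonal.antidiagonal k,
        (m p.1 (m p.2 x y) z - m p.1 x (m p.2 y z)) = 0)
    (W : A →ₗ[K] A →ₗ[K] A →ₗ[K] A)
    (hW : ∀ x y z : A, W x y z =
      ∑ i ∈ Finset.Ico 1 M, (m i (m (M - i) x y) z - m i x (m (M - i) y z))) :
    (∀ x y z w : A,
      m 0 x (W y z w) - W (m 0 x y) z w + W x (m 0 y z) w
        - W x y (m 0 z w) + m 0 (W x y z) w = 0) ∧
    ((∃ μM : A →ₗ[K] A →ₗ[K] A, ∀ x y z : A,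
        m 0 (μM x y) z - m 0 x (μM y z) + μM (m 0 x y) z - μM x (m 0 y z)
          + W x y z = 0) ↔
      (∃ ν : A →ₗ[K] A →ₗ[K] A, ∀ x y z : A,
        W x y z = m 0 x (ν y z) - ν (m 0 x y) z + ν x (m 0 y z) - m 0 (ν x y) z)) ∧
    ((∀ T : A →ₗ[K] A →ₗ[K] A →ₗ[K] A,
        (∀ x y z w : A,
          m 0 x (T y z w) - T (m 0 x y) z w + T x (m 0 y z) w
            - T x y (m 0 z w) + m 0 (T x y z) w = 0) →
        ∃ ν : A →ₗ[K] A →ₗ[K] A, ∀ x y z : A,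
          T x y z = m 0 x (ν y z) - ν (m 0 x y) z + ν x (m 0 y z) - m 0 (ν x y) z) →
      ∃ μM : A →ₗ[K] A →ₗ[K] A, ∀ x y z : A,
        m 0 (μM x y) z - m 0 x (μM y z) + μM (m 0 x y) z - μM x (m 0 y z)
          + W x y z = 0) := by
  classical
  set m' : ℕ → A →ₗ[K] A →ₗ[K] A := fun i => if i < M then m i else 0 with hm'
  have hmM : m' M = 0 := if_neg (lt_irrefl M)
  have hm0 : m 0 = m' 0 := (if_pos hM).symm
  have hn' : ∀ k : ℕ, k < M → ∀ a b c : A, sS m' k a b c = 0 := by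
    intro k hk a b c
    have hc : ∀ p ∈ Finset.HasAntidiagonal.antidiagonal k,
        m' p.1 (m' p.2 a b) c - m' p.1 a (m' p.2 b c)
          = m p.1 (m p.2 a b) c - m p.1 a (m p.2 b c) := by
      intro p hp
      have h := Finset.HasAntidiagonal.mem_antidiagonal.mp hp
      have h1 : p.1 < M := by omega
      have h2 : p.2 < M := by omega
      simp [hm', h1, h2]
    rw [sS, Finset.sum_congr rfl hc]
    exact htrunc k hk a b c
  have hWs : ∀ a b c : A, W a b c = sS m' M a b c := by
    intro a b c
    have hsub : Finset.Ico 1 M ⊆ Finset.range (M + 1) := by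
      intro i hi
      simp only [Finset.mem_Ico] at hi
      simp only [Finset.mem_range]
      omega
    have hzero : ∀ i ∈ Finset.range (M + 1), i ∉ Finset.Ico 1 M →
        m' i (m' (M - i) a b) c - m' i a (m' (M - i) b c) = 0 := by
      intro i hir hin
      simp only [Finset.mem_range] at hir
      simp only [Finset.mem_Ico, not_and, not_lt] at hin
      have : i = 0 ∨ i = M := by omega
      rcases this with rfl | rfl
      · simp [Nat.sub_zero, hmM]
      · simp [hmM]
    have key : sS m' M a b c
        = ∑ i ∈ Finset.Ico 1 M, (m i (m (M - i) a b) c - m i a (m (M - i) b c)) := by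
      rw [sS, Finset.Nat.sum_antidiagonal_eq_sum_range_succ_mk,
        ← Finset.sum_subset hsub hzero]
      refine Finset.sum_congr rfl fun i hi => ?_
      simp only [Finset.mem_Ico] at hi
      have hi1 : i < M := hi.2
      have hi2 : M - i < M := by omega
      simp [hm', hi1, hi2]
    rw [hW, key]
  have h1 : ∀ x y z w : A,
      m 0 x (W y z w) - W (m 0 x y) z w + W x (m 0 y z) w
        - W x y (m 0 z w) + m 0 (W x y z) w = 0 := by
    intro x y z w
    simp only [hWs]
    rw [hm0]
    exact pentagon m' M hn' x y z w
  refine ⟨h1, ?_, ?_⟩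
  · constructor
    · rintro ⟨μM, hμ⟩
      refine ⟨μM, fun x y z => ?_⟩
      rw [eq_neg_of_add_eq_zero_right (hμ x y z)]
      abel
    · rintro ⟨ν, hν⟩
      refine ⟨ν, fun x y z => ?_⟩
      rw [hν x y z]
      abel
  · intro H
    obtain ⟨ν, hν⟩ := H W h1
    refine ⟨ν, fun x y z => ?_⟩
    rw [hν x y z]
    abel
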